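/- Let f : [0, T] → (0, 1] be continuous, let Z : [0, T] → [−1, 1] be measurable, and let Y : [0, T] → ℝ be differentiable with Y'(t) = −Z(t) f(t) for all t, where Z(t) ∈ σ(Y(t)) with σ(y) = {sgn(y)} for y ≠ 0 and σ(0) = [−1, 1]. Then once Y hits zero it stays at zero: if Y(t₀) = 0 for some t₀ ∈ [0, T], then Y(t) = 0 for all t ∈ [t₀, T]. Consequently Z(t) = sgn(Y(t)) for almost every t. -/

import Mathlib

open MeasureTheory

lemma stmt11_aux {a b : ℝ} (hab : a ≤ b) (f Z Y : ℝ → ℝ)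
    (hf : ∀ t ∈ Set.Icc a b, 0 < f t)
    (hZ1 : ∀ t ∈ Set.Icc a b, 0 < Y t → Z t = 1)
    (hY : ∀ t ∈ Set.Icc a b, HasDerivAt Y (-(Z t) * f t) t)
    (ha : Y a = 0) : Y b ≤ 0 := by
  by_contra hb
  push_neg at hb
  have hcont : ∀ t ∈ Set.Icc a b, ContinuousAt Y t := fun t ht => (hY t ht).continuousAt
  set S : Set ℝ := {t ∈ Set.Icc a b | Y t = 0} with hSdef
  have hane : a ∈ S := ⟨⟨le_refl a, hab⟩, ha⟩
  have hSne : S.Nonempty := ⟨a, hane⟩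
  have hSbdd : BddAbove S := ⟨b, fun x hx => hx.1.2⟩
  set s := sSup S with hsdef
  have hsmem : s ∈ Set.Icc a b := ⟨le_csSup hSbdd hane, csSup_le hSne fun x hx => hx.1.2⟩
  have hYs : Y s = 0 := by
    have hcl : s ∈ closure S := csSup_mem_closure hSne hSbdd
    rcases mem_closure_iff_seq_limit.1 hcl with ⟨u, hu, hul⟩
    have h1 : Filter.Tendsto (Y ∘ u) Filter.atTop (nhds (Y s)) :=
      ((hcont s hsmem).tendsto).comp hul
    have h2 : (Y ∘ u) = fun _ => (0 : ℝ) := funext fun n => (hu n).2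
    rw [h2] at h1
    exact tendsto_nhds_unique h1 tendsto_const_nhds
  have hsb : s < b := by
    rcases lt_or_eq_of_le hsmem.2 with h | h
    · exact h
    · exfalso; rw [h] at hYs; linarith
  have hpos : ∀ u ∈ Set.Ioc s b, 0 < Y u := by
    intro u hu
    by_contra h
    push_neg at h
    have humem : u ∈ Set.Icc a b := ⟨le_trans hsmem.1 (le_of_lt hu.1), hu.2⟩
    rcases lt_or_eq_of_le h with h | h
    · -- Y u < 0, IVT gives a zero in (u, b]
      have hco : ContinuousOn Y (Set.Icc u b) := fun x hx =>
        (hcont x ⟨le_trans humem.1 hx.1, hx.2⟩).continuousWithinAt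
      have h0 : (0:ℝ) ∈ Set.Icc (Y u) (Y b) := ⟨le_of_lt h, le_of_lt hb⟩
      rcases intermediate_value_Icc hu.2 hco h0 with ⟨v, hv, hYv⟩
      have : v ∈ S := ⟨⟨le_trans humem.1 hv.1, hv.2⟩, hYv⟩
      have : v ≤ s := le_csSup hSbdd this
      linarith [hv.1, hu.1]
    · have : u ∈ S := ⟨humem, h⟩
      have : u ≤ s := le_csSup hSbdd this
      linarith [hu.1]
  have hanti : AntitoneOn Y (Set.Icc s b) := by
    apply antitoneOn_of_deriv_nonpos (convex_Icc s b)
    · exact fun x hx => (hcont x ⟨le_trans hsmem.1 hx.1, hx.2⟩).continuousWithinAt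
    · intro x hx
      rw [interior_Icc] at hx
      exact ((hY x ⟨le_trans hsmem.1 (le_of_lt hx.1), le_of_lt hx.2⟩).differentiableAt).differentiableWithinAt
    · intro x hx
      rw [interior_Icc] at hx
      have hxm : x ∈ Set.Icc a b := ⟨le_trans hsmem.1 (le_of_lt hx.1), le_of_lt hx.2⟩
      rw [(hY x hxm).deriv, hZ1 x hxm (hpos x ⟨hx.1, le_of_lt hx.2⟩)]
      have := hf x hxm
      nlinarith
  have : Y b ≤ Y s := hanti ⟨le_refl s, le_of_lt hsb⟩ ⟨le_of_lt hsb, le_refl b⟩ (le_of_lt hsb)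
  linarith

/-- If `Y' = −Z f` on `[0,T]` with `f` continuous taking values in `(0,1]`,
`Z` taking values in `[−1,1]` and `Z t = sgn (Y t)` whenever `Y t ≠ 0` (Filippov selection),
then once `Y` hits zero it stays at zero, and `Z t = sgn (Y t)` for a.e. `t ∈ [0,T]`. -/
theorem stmt11 (T : ℝ) (hT : 0 < T) (f Z Y : ℝ → ℝ)
    (hf : ContinuousOn f (Set.Icc 0 T))
    (hf' : ∀ t ∈ Set.Icc 0 T, f t ∈ Set.Ioc (0 : ℝ) 1)
    (hZ : ∀ t ∈ Set.Icc 0 T, Z t ∈ Set.Icc (-1 : ℝ) 1)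
    (hZY : ∀ t ∈ Set.Icc 0 T, Y t ≠ 0 → Z t = Real.sign (Y t))
    (hY : ∀ t ∈ Set.Icc 0 T, HasDerivAt Y (-(Z t) * f t) t) :
    (∀ t₀ ∈ Set.Icc 0 T, Y t₀ = 0 → ∀ t ∈ Set.Icc t₀ T, Y t = 0) ∧
    (∀ᵐ t ∂(volume.restrict (Set.Icc 0 T)), Z t = Real.sign (Y t)) := by
  have part1 : ∀ t₀ ∈ Set.Icc 0 T, Y t₀ = 0 → ∀ t ∈ Set.Icc t₀ T, Y t = 0 := by
    intro t₀ ht₀ hY0 t ht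
    have hsub : Set.Icc t₀ t ⊆ Set.Icc 0 T := fun u hu =>
      ⟨le_trans ht₀.1 hu.1, le_trans hu.2 ht.2⟩
    have h1 : Y t ≤ 0 := by
      apply stmt11_aux ht.1 f Z Y (fun u hu => (hf' u (hsub hu)).1) _ (fun u hu => hY u (hsub hu)) hY0
      intro u hu hYu
      rw [hZY u (hsub hu) (ne_of_gt hYu)]
      exact Real.sign_of_pos hYu
    have h2 : -Y t ≤ 0 := by
      refine stmt11_aux ht.1 f (fun x => -Z x) (fun x => -Y x)
        (fun u hu => (hf' u (hsub hu)).1) ?_ ?_ (by simp [hY0])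
      · intro u hu hYu
        have hneg : Y u < 0 := by simpa using hYu
        have h3 : Z u = Real.sign (Y u) := hZY u (hsub hu) (ne_of_lt hneg)
        rw [h3, Real.sign_of_neg hneg]; ring
      · intro u hu
        have h4 := (hY u (hsub hu)).neg
        show HasDerivAt (fun x => -Y x) (-(-Z u) * f u) u
        rw [show -(-Z u) * f u = -(-Z u * f u) by ring]
        exact h4
    linarith
  refine ⟨part1, ?_⟩
  by_cases hO : ∃ t ∈ Set.Icc 0 T, Y t = 0
  · obtain ⟨w, hw, hYw⟩ := hO
    set O : Set ℝ := {t ∈ Set.Icc 0 T | Y t = 0} with hOdef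
    have hOne : O.Nonempty := ⟨w, hw, hYw⟩
    have hObdd : BddBelow O := ⟨0, fun x hx => hx.1.1⟩
    set ts := sInf O with htsdef
    have htsmem : ts ∈ Set.Icc 0 T := ⟨le_csInf hOne fun x hx => hx.1.1, csInf_le_of_le hObdd ⟨hw, hYw⟩ hw.2⟩
    have hYts : Y ts = 0 := by
      have hcl : ts ∈ closure O := csInf_mem_closure hOne hObdd
      rcases mem_closure_iff_seq_limit.1 hcl with ⟨u, hu, hul⟩
      have h1 : Filter.Tendsto (Y ∘ u) Filter.atTop (nhds (Y ts)) :=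
        ((hY ts htsmem).continuousAt.tendsto).comp hul
      have h2 : (Y ∘ u) = fun _ => (0 : ℝ) := funext fun n => (hu n).2
      rw [h2] at h1
      exact tendsto_nhds_unique h1 tendsto_const_nhds
    have hzero : ∀ t ∈ Set.Icc ts T, Y t = 0 := part1 ts htsmem hYts
    have hclaim : ∀ t ∈ Set.Icc 0 T, t ≠ ts → t ≠ T → Z t = Real.sign (Y t) := by
      intro t ht hne hneT
      rcases lt_trichotomy t ts with h | h | h
      · apply hZY t ht
        intro hz
        have : ts ≤ t := csInf_le hObdd ⟨ht, hz⟩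
        linarith
      · exact absurd h hne
      · have htT : t < T := lt_of_le_of_ne ht.2 hneT
        have hev : Y =ᶠ[nhds t] fun _ => (0:ℝ) := by
          filter_upwards [isOpen_Ioo.mem_nhds (⟨h, htT⟩ : t ∈ Set.Ioo ts T)] with x hx
          exact hzero x ⟨le_of_lt hx.1, le_of_lt hx.2⟩
        have hd0 : HasDerivAt Y 0 t := (hasDerivAt_const t (0:ℝ)).congr_of_eventuallyEq hev
        have := (hY t ht).unique hd0
        have hfpos := (hf' t ht).1
        have hZt : Z t = 0 := by
          rcases mul_eq_zero.1 this with h' | h'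
          · linarith
          · linarith
        rw [hZt, hzero t ⟨le_of_lt h, ht.2⟩, Real.sign_zero]
    have hnull : (volume : Measure ℝ) ({ts, T} : Set ℝ) = 0 :=
      Set.Finite.measure_zero (Set.toFinite _) volume
    have hae1 : ∀ᵐ t ∂(volume.restrict (Set.Icc 0 T)), t ∉ ({ts, T} : Set ℝ) :=
      ae_restrict_of_ae (measure_eq_zero_iff_ae_notMem.1 hnull)
    have hae2 : ∀ᵐ t ∂(volume.restrict (Set.Icc 0 T)), t ∈ Set.Icc 0 T :=
      ae_restrict_mem measurableSet_Icc
    filter_upwards [hae1, hae2] with t hnm hmem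
    exact hclaim t hmem (fun h => hnm (by simp [h])) (fun h => hnm (by simp [h]))
  · push_neg at hO
    rw [ae_restrict_iff' measurableSet_Icc]
    exact ae_of_all _ fun t ht => hZY t ht (hO t ht)
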